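/- Let C be an abelian category. The category C_Q of objects up to isogeny is canonically equivalent to the quotient category of C by the Serre (thick) subcategory of objects of finite exponent, i.e. objects M such that n·id_M = 0 for some nonzero integer n. -/

import Mathlib

open CategoryTheory TensorProduct

universe v u

variable (C : Type u) [Category.{v} C] [Preadditive C]

/-- Isogenies in an additive category: morphisms `u : M ⟶ N` admitting `v : N ⟶ M`
and a nonzero integer `n` with `v∘u = n·id_M` and `u∘v = n·id_N`. -/
def Isogenies : CategoryTheory.MorphismProperty C :=
  fun M N u => ∃ (v : N ⟶ M) (n : ℤ), n ≠ 0 ∧ u ≫ v = n • 𝟙 M ∧ v ≫ u = n • 𝟙 N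

/-- The category `C_ℚ` of objects of `C` up to isogeny: same objects,
morphisms `Hom(E,F) ⊗_ℤ ℚ`. -/
structure CQ where
  /-- the underlying object -/
  obj : C

variable {C}

/-- Composition, bilinear over the pure-tensor formula `(f⊗q) ≫ (g⊗r) = (f≫g)⊗(qr)`. -/
noncomputable def CQ.comp {X Y Z : CQ C}
    (x : (X.obj ⟶ Y.obj) ⊗[ℤ] ℚ) (y : (Y.obj ⟶ Z.obj) ⊗[ℤ] ℚ) :
    (X.obj ⟶ Z.obj) ⊗[ℤ] ℚ :=
  (TensorProduct.map
      (TensorProduct.lift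
        { toFun := fun f =>
            { toFun := fun g => f ≫ g
              map_add' := fun g g' => Preadditive.comp_add _ _ _ _ _ _
              map_smul' := fun n g => by simp }
          map_add' := fun f f' => by ext g; simp [Preadditive.add_comp]
          map_smul' := fun n f => by ext g; simp })
      (LinearMap.mul' ℤ ℚ))
    ((TensorProduct.tensorTensorTensorComm ℤ (X.obj ⟶ Y.obj) ℚ (Y.obj ⟶ Z.obj) ℚ)
      (x ⊗ₜ y))

theorem CQ.comp_zero_left {X Y Z : CQ C} (y : (Y.obj ⟶ Z.obj) ⊗[ℤ] ℚ) :
    CQ.comp (X := X) (0 : (X.obj ⟶ Y.obj) ⊗[ℤ] ℚ) y = 0 := by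
  simp [CQ.comp]

theorem CQ.comp_zero_right {X Y Z : CQ C} (x : (X.obj ⟶ Y.obj) ⊗[ℤ] ℚ) :
    CQ.comp (Z := Z) x (0 : (Y.obj ⟶ Z.obj) ⊗[ℤ] ℚ) = 0 := by
  simp [CQ.comp]

theorem CQ.comp_add_left {X Y Z : CQ C} (a b : (X.obj ⟶ Y.obj) ⊗[ℤ] ℚ)
    (y : (Y.obj ⟶ Z.obj) ⊗[ℤ] ℚ) :
    CQ.comp (a + b) y = CQ.comp a y + CQ.comp b y := by
  simp [CQ.comp, add_tmul]

theorem CQ.comp_add_right {X Y Z : CQ C} (x : (X.obj ⟶ Y.obj) ⊗[ℤ] ℚ)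
    (a b : (Y.obj ⟶ Z.obj) ⊗[ℤ] ℚ) :
    CQ.comp (x) (a + b) = CQ.comp x a + CQ.comp x b := by
  simp [CQ.comp, tmul_add]

theorem CQ.comp_tmul {X Y Z : CQ C} (f : X.obj ⟶ Y.obj) (q : ℚ)
    (g : Y.obj ⟶ Z.obj) (r : ℚ) :
    CQ.comp (f ⊗ₜ q) (g ⊗ₜ r) = (f ≫ g) ⊗ₜ[ℤ] (q * r) := by
  simp [CQ.comp]

noncomputable instance : Category (CQ C) where
  Hom X Y := (X.obj ⟶ Y.obj) ⊗[ℤ] ℚ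
  id X := 𝟙 X.obj ⊗ₜ (1 : ℚ)
  comp := CQ.comp
  id_comp := by
    intro X Y f
    show CQ.comp _ _ = _
    induction f using TensorProduct.induction_on with
    | zero => simp [CQ.comp]
    | tmul g r => simp [CQ.comp]
    | add a b ha hb =>
      rw [CQ.comp_add_right, ha, hb]
  comp_id := by
    intro X Y f
    show CQ.comp _ _ = _
    induction f using TensorProduct.induction_on with
    | zero => simp [CQ.comp]
    | tmul g r => simp [CQ.comp]
    | add a b ha hb =>
      rw [CQ.comp_add_left, ha, hb]
  assoc := by
    intro W X Y Z f g h
    show CQ.comp (CQ.comp f g) h = CQ.comp f (CQ.comp g h)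
    induction f using TensorProduct.induction_on with
    | zero => rw [CQ.comp_zero_left, CQ.comp_zero_left, CQ.comp_zero_left]
    | add a b ha hb =>
      rw [CQ.comp_add_left, CQ.comp_add_left, CQ.comp_add_left, ha, hb]
    | tmul f q =>
      induction g using TensorProduct.induction_on with
      | zero => rw [CQ.comp_zero_right, CQ.comp_zero_left, CQ.comp_zero_left,
          CQ.comp_zero_right]
      | add a b ha hb =>
        rw [CQ.comp_add_right, CQ.comp_add_left, CQ.comp_add_left, ha, hb,
          CQ.comp_add_right]
      | tmul g r =>
        induction h using TensorProduct.induction_on with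
        | zero => rw [CQ.comp_zero_right, CQ.comp_zero_right, CQ.comp_zero_right]
        | add a b ha hb =>
          rw [CQ.comp_add_right, CQ.comp_add_right, ha, hb, CQ.comp_add_right]
        | tmul h s =>
          rw [CQ.comp_tmul, CQ.comp_tmul, CQ.comp_tmul, CQ.comp_tmul,
            Category.assoc, mul_assoc]

/-- The localization functor `C ⥤ C_ℚ`. -/
noncomputable def QFunctor (C : Type u) [Category.{v} C] [Preadditive C] :
    C ⥤ CQ C where
  obj X := ⟨X⟩
  map f := f ⊗ₜ (1 : ℚ)
  map_id X := rfl
  map_comp := by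
    intro X Y Z f g
    show _ = CQ.comp _ _
    simp [CQ.comp]

/-!
STATEMENT 2: For an abelian category `C`, the category `C_ℚ` is canonically
equivalent to the quotient of `C` by the Serre subcategory of objects of finite
exponent (objects `M` with `n·id_M = 0` for some nonzero integer `n`).
The quotient of an abelian category by a Serre subcategory is its localization
at the class of morphisms whose kernel and cokernel lie in the subcategory;
accordingly, the statement is formalized as: the canonical functor `C ⥤ C_ℚ`
is the localization of `C` at the class of morphisms whose kernel and cokernel
have finite exponent.
-/

/-- An object has finite exponent if it is killed by a nonzero integer. -/
def HasFiniteExponent {C : Type u} [Category.{v} C] [Preadditive C] (M : C) :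
    Prop :=
  ∃ n : ℤ, n ≠ 0 ∧ (n • 𝟙 M : M ⟶ M) = 0


section Statement2Aux

open Limits

/-! ### Algebraic lemmas about `M ⊗[ℤ] ℚ` -/

lemma exists_frac {M : Type*} [AddCommGroup M] (x : M ⊗[ℤ] ℚ) :
    ∃ (m : M) (n : ℤ), n ≠ 0 ∧ x = m ⊗ₜ[ℤ] ((n : ℚ)⁻¹) := by
  induction x using TensorProduct.induction_on with
  | zero => exact ⟨0, 1, one_ne_zero, by simp⟩
  | tmul m q =>
    refine ⟨q.num • m, (q.den : ℤ), by exact_mod_cast q.den_nz, ?_⟩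
    rw [smul_tmul]
    congr 1
    rw [zsmul_eq_mul]
    push_cast
    conv_lhs => rw [← Rat.num_div_den q]
    rw [div_eq_mul_inv]
  | add a b ha hb =>
    obtain ⟨m, n, hn, rfl⟩ := ha
    obtain ⟨m', n', hn', rfl⟩ := hb
    refine ⟨n' • m + n • m', n * n', mul_ne_zero hn hn', ?_⟩
    have hnq : (n : ℚ) ≠ 0 := Int.cast_ne_zero.2 hn
    have hn'q : (n' : ℚ) ≠ 0 := Int.cast_ne_zero.2 hn'
    have e1 : ((n' : ℤ) • (((n * n' : ℤ) : ℚ))⁻¹) = (n : ℚ)⁻¹ := by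
      rw [zsmul_eq_mul]; push_cast; field_simp; try ring
    have e2 : ((n : ℤ) • (((n * n' : ℤ) : ℚ))⁻¹) = (n' : ℚ)⁻¹ := by
      rw [zsmul_eq_mul]; push_cast; field_simp; try ring
    rw [add_tmul, smul_tmul, smul_tmul, e1, e2]

lemma exists_smul_eq_zero {M : Type*} [AddCommGroup M] (m : M)
    (h : m ⊗ₜ[ℤ] (1 : ℚ) = 0) : ∃ k : ℤ, k ≠ 0 ∧ k • m = 0 := by
  have hlm : IsLocalizedModule (nonZeroDivisors ℤ) (TensorProduct.mk ℤ ℚ M 1) :=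
    (isLocalizedModule_iff_isBaseChange (nonZeroDivisors ℤ) ℚ _).2
      (TensorProduct.isBaseChange ℤ M ℚ)
  have h1 : (TensorProduct.mk ℤ ℚ M 1) m = 0 := by
    have := congrArg (TensorProduct.comm ℤ M ℚ) h
    simpa [TensorProduct.mk] using this
  rw [IsLocalizedModule.eq_zero_iff (nonZeroDivisors ℤ)] at h1
  obtain ⟨s, hs⟩ := h1
  exact ⟨s, nonZeroDivisors.coe_ne_zero s, hs⟩

lemma frac_sub_zero {M : Type*} [AddCommGroup M] (m m' : M) (n n' : ℤ)
    (hn : n ≠ 0) (hn' : n' ≠ 0)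
    (h : m ⊗ₜ[ℤ] ((n : ℚ)⁻¹) = m' ⊗ₜ[ℤ] ((n' : ℚ)⁻¹)) :
    ∃ k : ℤ, k ≠ 0 ∧ (k * n') • m = (k * n) • m' := by
  have hnq : (n : ℚ) ≠ 0 := Int.cast_ne_zero.2 hn
  have hn'q : (n' : ℚ) ≠ 0 := Int.cast_ne_zero.2 hn'
  have s1 : ((n * n' : ℤ) • ((n : ℚ))⁻¹) = ((n' : ℤ) • (1 : ℚ)) := by
    rw [zsmul_eq_mul, zsmul_eq_mul]; push_cast; field_simp; try ring
  have s2 : ((n * n' : ℤ) • ((n' : ℚ))⁻¹) = ((n : ℤ) • (1 : ℚ)) := by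
    rw [zsmul_eq_mul, zsmul_eq_mul]; push_cast; field_simp; try ring
  have h1 : (n' • m) ⊗ₜ[ℤ] (1 : ℚ) = (n • m') ⊗ₜ[ℤ] (1 : ℚ) := by
    have := congrArg (fun z => (n * n' : ℤ) • z) h
    simp only [← tmul_smul] at this
    rw [s1, s2] at this
    rwa [← smul_tmul, ← smul_tmul] at this
  have h2 : (n' • m - n • m') ⊗ₜ[ℤ] (1 : ℚ) = 0 := by
    rw [sub_tmul, h1, sub_self]
  obtain ⟨k, hk, hk0⟩ := exists_smul_eq_zero _ h2
  refine ⟨k, hk, ?_⟩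
  rw [smul_sub, sub_eq_zero] at hk0
  rw [mul_smul, mul_smul]
  exact hk0

/-! ### Categorical lemmas -/

variable {C : Type u} [Category.{v} C] [Abelian C]

/-- The Serre class of morphisms whose kernel and cokernel have finite exponent. -/
def FEW (C : Type u) [Category.{v} C] [Abelian C] : MorphismProperty C :=
  fun _ _ f => HasFiniteExponent (kernel f) ∧ HasFiniteExponent (cokernel f)

lemma smul_id_mem_FEW (Y : C) (n : ℤ) (hn : n ≠ 0) : FEW C ((n • 𝟙 Y : Y ⟶ Y)) := by
  constructor
  · refine ⟨n, hn, ?_⟩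
    rw [← cancel_mono (kernel.ι (n • 𝟙 Y))]
    have := kernel.condition (n • 𝟙 Y)
    simp only [Preadditive.comp_zsmul, Category.comp_id] at this
    simp [Preadditive.zsmul_comp, this]
  · refine ⟨n, hn, ?_⟩
    rw [← cancel_epi (cokernel.π (n • 𝟙 Y))]
    have := cokernel.condition (n • 𝟙 Y)
    simp only [Preadditive.zsmul_comp, Category.id_comp] at this
    simp [Preadditive.comp_zsmul, this]

lemma exists_isogeny {X Y : C} (f : X ⟶ Y) (hf : FEW C f) :
    ∃ (g : Y ⟶ X) (n : ℤ), n ≠ 0 ∧ f ≫ g = n • 𝟙 X ∧ g ≫ f = n • 𝟙 Y := by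
  obtain ⟨⟨a, ha, hka⟩, ⟨b, hb, hkb⟩⟩ := hf
  set p : X ⟶ Abelian.coimage f := Abelian.coimage.π f with hp
  set fbar : Abelian.coimage f ⟶ Y := Abelian.factorThruCoimage f with hfbar
  have hpf : p ≫ fbar = f := Abelian.coimage.fac f
  have hker : kernel.ι f ≫ (a • 𝟙 X) = 0 := by
    have : (a • 𝟙 (kernel f)) ≫ kernel.ι f = 0 := by rw [hka, zero_comp]
    simpa [Preadditive.zsmul_comp, Preadditive.comp_zsmul] using this
  set s : Abelian.coimage f ⟶ X := cokernel.desc (kernel.ι f) (a • 𝟙 X) hker with hs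
  have hps : p ≫ s = a • 𝟙 X := cokernel.π_desc _ _ _
  have hfbarcoker : f ≫ cokernel.π fbar = 0 := by
    have : (p ≫ fbar) ≫ cokernel.π fbar = 0 := by
      rw [Category.assoc, cokernel.condition, comp_zero]
    rwa [hpf] at this
  set d : cokernel f ⟶ cokernel fbar := cokernel.desc f (cokernel.π fbar) hfbarcoker with hd
  have hπd : cokernel.π f ≫ d = cokernel.π fbar := cokernel.π_desc _ _ _
  have hcb : (b • 𝟙 Y) ≫ cokernel.π fbar = 0 := by
    rw [← hπd, ← Category.assoc]
    have : (b • 𝟙 Y) ≫ cokernel.π f = 0 := by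
      have h1 : cokernel.π f ≫ (b • 𝟙 (cokernel f)) = 0 := by rw [hkb, comp_zero]
      simpa [Preadditive.zsmul_comp, Preadditive.comp_zsmul] using h1
    rw [this, zero_comp]
  set t : Y ⟶ Abelian.coimage f := Abelian.monoLift fbar (b • 𝟙 Y) hcb with ht
  have htf : t ≫ fbar = b • 𝟙 Y := Abelian.monoLift_comp _ _ _
  have hsp : s ≫ p = a • 𝟙 (Abelian.coimage f) := by
    rw [← cancel_epi p, ← Category.assoc, hps]
    simp [Preadditive.zsmul_comp, Preadditive.comp_zsmul]
  have hft : fbar ≫ t = b • 𝟙 (Abelian.coimage f) := by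
    rw [← cancel_mono fbar, Category.assoc, htf]
    simp [Preadditive.zsmul_comp, Preadditive.comp_zsmul]
  refine ⟨t ≫ s, a * b, mul_ne_zero ha hb, ?_, ?_⟩
  · have c1 : (p ≫ fbar) ≫ t ≫ s = (a * b) • 𝟙 X := by
      calc (p ≫ fbar) ≫ t ≫ s = p ≫ (fbar ≫ t) ≫ s := by simp only [Category.assoc]
      _ = p ≫ (b • 𝟙 _) ≫ s := by rw [hft]
      _ = b • (p ≫ s) := by simp [Preadditive.zsmul_comp, Preadditive.comp_zsmul]
      _ = (a * b) • 𝟙 X := by rw [hps, smul_smul, mul_comm]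
    rwa [hpf] at c1
  · have c2 : (t ≫ s) ≫ (p ≫ fbar) = (a * b) • 𝟙 Y := by
      calc (t ≫ s) ≫ (p ≫ fbar) = t ≫ (s ≫ p) ≫ fbar := by simp only [Category.assoc]
      _ = t ≫ (a • 𝟙 _) ≫ fbar := by rw [hsp]
      _ = a • (t ≫ fbar) := by simp [Preadditive.zsmul_comp, Preadditive.comp_zsmul]
      _ = (a * b) • 𝟙 Y := by rw [htf, smul_smul]
    rwa [hpf] at c2

lemma QFunctor_inverts : (FEW C).IsInvertedBy (QFunctor C) := by
  intro X Y f hf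
  obtain ⟨g, n, hn, h1, h2⟩ := exists_isogeny f hf
  have hnq : (n : ℚ) ≠ 0 := Int.cast_ne_zero.2 hn
  refine ⟨⟨(g ⊗ₜ[ℤ] ((n : ℚ)⁻¹) : (⟨Y⟩ : CQ C) ⟶ ⟨X⟩), ?_, ?_⟩⟩
  · show CQ.comp (f ⊗ₜ[ℤ] (1 : ℚ)) (g ⊗ₜ[ℤ] ((n : ℚ)⁻¹)) = 𝟙 X ⊗ₜ[ℤ] (1 : ℚ)
    rw [CQ.comp_tmul, h1, one_mul]
    exact (smul_tmul n (𝟙 X) ((n : ℚ)⁻¹)).trans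
      (by congr 1; rw [zsmul_eq_mul]; field_simp)
  · show CQ.comp (g ⊗ₜ[ℤ] ((n : ℚ)⁻¹)) (f ⊗ₜ[ℤ] (1 : ℚ)) = 𝟙 Y ⊗ₜ[ℤ] (1 : ℚ)
    rw [CQ.comp_tmul, h2, mul_one]
    exact (smul_tmul n (𝟙 Y) ((n : ℚ)⁻¹)).trans
      (by congr 1; rw [zsmul_eq_mul]; field_simp)

universe w₂ w₁

variable {E : Type w₁} [Category.{w₂} E]

lemma map_smul_id_mul (F : C ⥤ E) (Y : C) (i j : ℤ) :
    F.map (((i * j : ℤ) • 𝟙 Y : Y ⟶ Y)) = F.map (i • 𝟙 Y) ≫ F.map (j • 𝟙 Y) := by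
  rw [← F.map_comp]
  congr 1
  simp [Preadditive.zsmul_comp, Preadditive.comp_zsmul, smul_smul, mul_comm i j]

lemma map_smul_id_comm (F : C ⥤ E) {X Y : C} (m : X ⟶ Y) (j : ℤ) :
    F.map ((j • 𝟙 X : X ⟶ X)) ≫ F.map m = F.map m ≫ F.map (j • 𝟙 Y) := by
  rw [← F.map_comp, ← F.map_comp]
  congr 1
  simp [Preadditive.zsmul_comp, Preadditive.comp_zsmul]

section Lift

variable (F : C ⥤ E) (hF : (FEW C).IsInvertedBy F)

lemma isIso_map_smul_id (hF : (FEW C).IsInvertedBy F) (Y : C) (n : ℤ) (hn : n ≠ 0) :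
    IsIso (F.map ((n • 𝟙 Y : Y ⟶ Y))) :=
  hF _ (smul_id_mem_FEW Y n hn)

lemma key_frac_eq {X Y : C} (m m' : X ⟶ Y) (n n' : ℤ) (hn : n ≠ 0) (hn' : n' ≠ 0)
    (h : m ⊗ₜ[ℤ] ((n : ℚ)⁻¹) = m' ⊗ₜ[ℤ] ((n' : ℚ)⁻¹)) :
    F.map m ≫ inv (F.map (n • 𝟙 Y)) (I := isIso_map_smul_id F hF Y n hn) =
      F.map m' ≫ inv (F.map (n' • 𝟙 Y)) (I := isIso_map_smul_id F hF Y n' hn') := by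
  haveI := isIso_map_smul_id F hF Y n hn
  haveI := isIso_map_smul_id F hF Y n' hn'
  obtain ⟨k, hk, hkeq⟩ := frac_sub_zero m m' n n' hn hn' h
  haveI := isIso_map_smul_id F hF Y (n * n' * k) (mul_ne_zero (mul_ne_zero hn hn') hk)
  rw [← cancel_mono (F.map ((n * n' * k) • 𝟙 Y))]
  have hL : F.map m ≫ inv (F.map (n • 𝟙 Y)) ≫ F.map ((n * n' * k) • 𝟙 Y) =
      F.map m ≫ F.map ((n' * k) • 𝟙 Y) := by
    congr 1
    rw [show n * n' * k = n * (n' * k) by ring, map_smul_id_mul, IsIso.inv_hom_id_assoc]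
  have hR : F.map m' ≫ inv (F.map (n' • 𝟙 Y)) ≫ F.map ((n * n' * k) • 𝟙 Y) =
      F.map m' ≫ F.map ((n * k) • 𝟙 Y) := by
    congr 1
    rw [show n * n' * k = n' * (n * k) by ring, map_smul_id_mul, IsIso.inv_hom_id_assoc]
  rw [Category.assoc, Category.assoc, hL, hR, ← F.map_comp, ← F.map_comp]
  congr 1
  have e1 : m ≫ ((n' * k : ℤ) • 𝟙 Y) = (n' * k) • m := by
    simp [Preadditive.comp_zsmul]
  have e2 : m' ≫ ((n * k : ℤ) • 𝟙 Y) = (n * k) • m' := by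
    simp [Preadditive.comp_zsmul]
  rw [e1, e2, mul_comm n' k, mul_comm n k]
  exact hkeq

noncomputable def liftMap (hF : (FEW C).IsInvertedBy F) {X Y : C}
    (x : (X ⟶ Y) ⊗[ℤ] ℚ) : F.obj X ⟶ F.obj Y :=
  F.map (exists_frac x).choose ≫
    inv (F.map ((exists_frac x).choose_spec.choose • 𝟙 Y))
      (I := isIso_map_smul_id F hF Y _ (exists_frac x).choose_spec.choose_spec.1)

lemma liftMap_eq (hF : (FEW C).IsInvertedBy F) {X Y : C} (x : (X ⟶ Y) ⊗[ℤ] ℚ)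
    (m : X ⟶ Y) (n : ℤ) (hn : n ≠ 0) (hx : x = m ⊗ₜ[ℤ] ((n : ℚ)⁻¹)) :
    liftMap F hF x =
      F.map m ≫ inv (F.map (n • 𝟙 Y)) (I := isIso_map_smul_id F hF Y n hn) := by
  have h1 : (exists_frac x).choose ⊗ₜ[ℤ]
      (((exists_frac x).choose_spec.choose : ℚ))⁻¹ = m ⊗ₜ[ℤ] ((n : ℚ)⁻¹) :=
    ((exists_frac x).choose_spec.choose_spec.2).symm.trans hx
  show F.map (exists_frac x).choose ≫
      inv (F.map ((exists_frac x).choose_spec.choose • 𝟙 Y))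
        (I := isIso_map_smul_id F hF Y _ (exists_frac x).choose_spec.choose_spec.1) = _
  exact key_frac_eq F hF _ m _ n
    (exists_frac x).choose_spec.choose_spec.1 hn h1

noncomputable def liftFunctor (hF : (FEW C).IsInvertedBy F) : CQ C ⥤ E where
  obj X := F.obj X.obj
  map {X Y} f := liftMap F hF f
  map_id X := by
    show liftMap F hF (𝟙 X.obj ⊗ₜ[ℤ] (1 : ℚ)) = 𝟙 (F.obj X.obj)
    rw [liftMap_eq F hF _ (𝟙 X.obj) 1 one_ne_zero
      (by show 𝟙 X.obj ⊗ₜ[ℤ] (1 : ℚ) = _; norm_num)]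
    haveI := isIso_map_smul_id F hF X.obj 1 one_ne_zero
    have e1 : ((1 : ℤ) • 𝟙 X.obj : X.obj ⟶ X.obj) = 𝟙 X.obj := one_smul _ _
    rw [IsIso.comp_inv_eq, e1, Category.id_comp]
  map_comp {X Y Z} f g := by
    obtain ⟨m, n, hn, hf⟩ := exists_frac (f : (X.obj ⟶ Y.obj) ⊗[ℤ] ℚ)
    obtain ⟨m', n', hn', hg⟩ := exists_frac (g : (Y.obj ⟶ Z.obj) ⊗[ℤ] ℚ)
    have hcomp : CQ.comp f g = (m ≫ m') ⊗ₜ[ℤ] (((n * n' : ℤ) : ℚ))⁻¹ := by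
      rw [hf, hg, CQ.comp_tmul]
      congr 1
      push_cast
      rw [mul_inv]
    show liftMap F hF (CQ.comp f g) = liftMap F hF f ≫ liftMap F hF g
    rw [liftMap_eq F hF _ _ _ (mul_ne_zero hn hn') hcomp,
      liftMap_eq F hF _ _ _ hn hf, liftMap_eq F hF _ _ _ hn' hg]
    haveI := isIso_map_smul_id F hF Y.obj n hn
    haveI := isIso_map_smul_id F hF Z.obj n hn
    haveI := isIso_map_smul_id F hF Z.obj n' hn'
    haveI := isIso_map_smul_id F hF Z.obj (n * n') (mul_ne_zero hn hn')
    rw [← cancel_mono (F.map ((n * n' : ℤ) • 𝟙 Z.obj))]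
    rw [Category.assoc, IsIso.inv_hom_id, Category.comp_id]
    rw [show (n * n' : ℤ) = n' * n from mul_comm n n', map_smul_id_mul]
    simp only [Category.assoc, IsIso.inv_hom_id_assoc]
    rw [← map_smul_id_comm F m' n]
    rw [IsIso.inv_hom_id_assoc, F.map_comp]

lemma lift_fac (hF : (FEW C).IsInvertedBy F) :
    QFunctor C ⋙ liftFunctor F hF = F := by
  refine CategoryTheory.Functor.ext (fun X => rfl) ?_
  intro X Y f
  have h0 : (QFunctor C ⋙ liftFunctor F hF).map f = liftMap F hF (f ⊗ₜ[ℤ] (1 : ℚ)) := rfl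
  rw [h0, liftMap_eq F hF _ f 1 one_ne_zero (by norm_num)]
  haveI := isIso_map_smul_id F hF Y 1 one_ne_zero
  have e1 : ((1 : ℤ) • 𝟙 Y : Y ⟶ Y) = 𝟙 Y := one_smul _ _
  change F.map f ≫ inv (F.map (1 • 𝟙 Y)) = 𝟙 (F.obj X) ≫ F.map f ≫ 𝟙 (F.obj Y)
  rw [Category.id_comp, Category.comp_id, IsIso.comp_inv_eq, e1]
  simp

lemma lift_uniq (G₁ G₂ : CQ C ⥤ E) (h : QFunctor C ⋙ G₁ = QFunctor C ⋙ G₂) :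
    G₁ = G₂ := by
  have hobj : ∀ X : CQ C, G₁.obj X = G₂.obj X := fun X => Functor.congr_obj h X.obj
  refine CategoryTheory.Functor.ext hobj ?_
  intro X Y f
  obtain ⟨m, n, hn, hf⟩ := exists_frac (f : (X.obj ⟶ Y.obj) ⊗[ℤ] ℚ)
  have hnq : (n : ℚ) ≠ 0 := Int.cast_ne_zero.2 hn
  let t : Y ⟶ Y := (𝟙 Y.obj ⊗ₜ[ℤ] ((n : ℚ)⁻¹) : (Y.obj ⟶ Y.obj) ⊗[ℤ] ℚ)
  let m' : X ⟶ Y := (QFunctor C).map m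
  let s : Y ⟶ Y := (QFunctor C).map (n • 𝟙 Y.obj)
  have hf2 : f = m' ≫ t := by
    show f = CQ.comp (m ⊗ₜ[ℤ] (1 : ℚ)) (𝟙 Y.obj ⊗ₜ[ℤ] ((n : ℚ)⁻¹))
    rw [CQ.comp_tmul, Category.comp_id, one_mul, hf]
  have ht1 : s ≫ t = 𝟙 Y := by
    show CQ.comp ((n • 𝟙 Y.obj) ⊗ₜ[ℤ] (1 : ℚ)) (𝟙 Y.obj ⊗ₜ[ℤ] ((n : ℚ)⁻¹)) =
      𝟙 Y.obj ⊗ₜ[ℤ] (1 : ℚ)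
    rw [CQ.comp_tmul, Category.comp_id, one_mul]
    exact (smul_tmul n (𝟙 Y.obj) _).trans (by congr 1; rw [zsmul_eq_mul]; field_simp)
  have ht2 : t ≫ s = 𝟙 Y := by
    show CQ.comp (𝟙 Y.obj ⊗ₜ[ℤ] ((n : ℚ)⁻¹)) ((n • 𝟙 Y.obj) ⊗ₜ[ℤ] (1 : ℚ)) =
      𝟙 Y.obj ⊗ₜ[ℤ] (1 : ℚ)
    rw [CQ.comp_tmul, Category.id_comp, mul_one]
    exact (smul_tmul n (𝟙 Y.obj) _).trans (by congr 1; rw [zsmul_eq_mul]; field_simp)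
  haveI : IsIso s := ⟨t, ht1, ht2⟩
  have htinv : t = inv s := by
    apply IsIso.eq_inv_of_hom_inv_id ht1
  rw [hf2, htinv, G₁.map_comp, G₂.map_comp, G₁.map_inv, G₂.map_inv]
  have c1 : G₁.map m' = eqToHom (hobj X) ≫ G₂.map m' ≫ eqToHom (hobj Y).symm :=
    Functor.congr_hom h m
  have c2 : G₁.map s = eqToHom (hobj Y) ≫ G₂.map s ≫ eqToHom (hobj Y).symm :=
    Functor.congr_hom h ((n : ℤ) • 𝟙 Y.obj)
  have c2' : inv (G₁.map s) =
      eqToHom (hobj Y) ≫ inv (G₂.map s) ≫ eqToHom (hobj Y).symm := by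
    apply IsIso.inv_eq_of_hom_inv_id
    rw [c2]
    simp
  rw [c1, c2']
  simp

noncomputable def strictUP (E : Type w₁) [Category.{w₂} E] :
    Localization.StrictUniversalPropertyFixedTarget (QFunctor C) (FEW C) E where
  inverts := QFunctor_inverts
  lift F hF := liftFunctor F hF
  fac F hF := lift_fac F hF
  uniq F₁ F₂ h := lift_uniq F₁ F₂ h

end Lift

end Statement2Aux

open Limits in
theorem statement2 (C : Type u) [Category.{v} C] [Abelian C] :
    (QFunctor C).IsLocalization
      (fun _ _ f => HasFiniteExponent (kernel f) ∧
        HasFiniteExponent (cokernel f) : MorphismProperty C) := by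
  have : (QFunctor C).IsLocalization (FEW C) :=
    Functor.IsLocalization.mk' _ _ (strictUP _) (strictUP _)
  exact this
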